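/- Let G be a graph and v a simplicial vertex of G. Then in the complement graph of G, v is not contained in any induced cycle of length at least 5. -/
import Mathlib


/-- `f : ZMod k → V` describes an induced cycle of length `k` in `G`. -/
def IsInducedCycle {V : Type*} (G : SimpleGraph V) (k : ℕ) (f : ZMod k → V) : Prop :=
  Function.Injective f ∧ ∀ i j : ZMod k, G.Adj (f i) (f j) ↔ (j = i + 1 ∨ i = j + 1)

/-- A vertex that is simplicial in `G` lies in no induced cycle of length at least 5
of the complement of `G`. -/
theorem simplicial_not_in_long_induced_cycle_compl {V : Type*} (G : SimpleGraph V) (v : V)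
    (hsimp : G.IsClique (G.neighborSet v)) :
    ∀ k : ℕ, 5 ≤ k → ∀ f : ZMod k → V, IsInducedCycle Gᶜ k f → v ∉ Set.range f := by
  intro k hk f ⟨hinj, hadj⟩ hv
  obtain ⟨i0, hi0⟩ := hv
  have hk0 : 0 < k := by omega
  haveI : NeZero k := ⟨by omega⟩
  have hcast : ∀ n : ℕ, 0 < n → n < k → (n : ZMod k) ≠ 0 := by
    intro n hn1 hn2 h
    have := Nat.le_of_dvd hn1 ((ZMod.natCast_eq_zero_iff n k).mp h)
    omega
  have h1 : (1 : ZMod k) ≠ 0 := by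
    have := hcast 1 (by omega) (by omega); simpa using this
  have h2 : (2 : ZMod k) ≠ 0 := by
    have := hcast 2 (by omega) (by omega); simpa using this
  have h3 : (3 : ZMod k) ≠ 0 := by
    have := hcast 3 (by omega) (by omega); simpa using this
  -- key: for j not cycle-adjacent to i0 and ≠ i0, v is G-adjacent to f j
  have hnbr : ∀ c : ZMod k, c ≠ 0 → c + 1 ≠ 0 → c ≠ 1 → f (i0 + c) ∈ G.neighborSet v := by
    intro c hc hc1 hc1'
    have hne : v ≠ f (i0 + c) := by
      rw [← hi0]; intro h
      exact hc (by simpa using (hinj h).symm)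
    have hnadj : ¬ Gᶜ.Adj (f i0) (f (i0 + c)) := by
      rw [hadj]
      push_neg
      constructor
      · intro h; exact hc1' (add_left_cancel h)
      · intro h
        apply hc1
        have : i0 + 0 = i0 + (c + 1) := by
          conv_lhs => rw [add_zero, h]
          rw [add_assoc]
        simpa using (add_left_cancel this).symm
    rw [hi0] at hnadj
    simp only [SimpleGraph.compl_adj, not_and, not_not] at hnadj
    exact hnadj hne
  have ha : f (i0 + 2) ∈ G.neighborSet v := by
    apply hnbr 2 h2 _ _
    · intro h
      have : ((3 : ℕ) : ZMod k) = 0 := by push_cast; linear_combination h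
      exact h3 (by simpa using this)
    · intro h
      have : ((1 : ℕ) : ZMod k) = 0 := by push_cast; linear_combination h
      exact h1 (by simpa using this)
  have hb : f (i0 + 3) ∈ G.neighborSet v := by
    apply hnbr 3 h3 _ _
    · intro h
      have : k ∣ 4 := by
        apply (ZMod.natCast_eq_zero_iff 4 k).mp
        push_cast; linear_combination h
      have := Nat.le_of_dvd (by norm_num) this
      omega
    · intro h
      have : ((2 : ℕ) : ZMod k) = 0 := by push_cast; linear_combination h
      exact h2 (by simpa using this)
  have hab : f (i0 + 2) ≠ f (i0 + 3) := by
    intro h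
    have := hinj h
    have : ((1 : ℕ) : ZMod k) = 0 := by push_cast; linear_combination (add_left_cancel this).symm
    exact h1 (by simpa using this)
  have hG : G.Adj (f (i0 + 2)) (f (i0 + 3)) := hsimp ha hb hab
  have hGc : Gᶜ.Adj (f (i0 + 2)) (f (i0 + 3)) := by
    rw [hadj]; left; ring
  exact hGc.2 hG
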